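/- Let b ≥ 2 be an integer. There exists a constant c > 0 (depending only on b) such that for all integers n ≥ 1, all generalized Hammersley point sets R_n with discrepancy function D, and all j₁, j₂ ∈ ℕ₀ with j₁ + j₂ ≥ n − 1 and j₁ ≤ n, j₂ ≤ n, all m₁ ∈ {0,…,b^{j₁}−1}, m₂ ∈ {0,…,b^{j₂}−1}, ℓ₁, ℓ₂ ∈ {1,…,b−1}, the Haar coefficient μ_{j,m,ℓ} = ∫_{[0,1)²} D(x)·h_{j₁,m₁,ℓ₁}(x₁)·h_{j₂,m₂,ℓ₂}(x₂) dx satisfies |μ_{j,m,ℓ}| ≤ c·b^{−n−j₁−j₂}; moreover, for each fixed such (j₁,j₂) and (ℓ₁,ℓ₂), the number of pairs (m₁,m₂) for which |μ_{j,m,ℓ}| ≠ b^{−2j₁−2j₂−2}/(|exp(2πiℓ₁/b) − 1|·|exp(2πiℓ₂/b) − 1|) is at most bⁿ. -/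

import Mathlib

open scoped Classical
open Finset MeasureTheory

/-- `bexp b ℓ k = exp(2πiℓk/b)`. -/
noncomputable def bexp (b ℓ k : ℕ) : ℂ :=
  Complex.exp (2 * Real.pi * Complex.I * ℓ * k / b)

/-- The `b`-adic Haar function `h_{j,m,ℓ}` on `[0,1)`. -/
noncomputable def haar (b j m ℓ : ℕ) (x : ℝ) : ℂ :=
  ∑ k ∈ Finset.range b,
    if ((b:ℝ)^(j+1))⁻¹ * ((b:ℝ)*m + k) ≤ x ∧ x < ((b:ℝ)^(j+1))⁻¹ * ((b:ℝ)*m + k + 1)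
    then bexp b ℓ k else 0

/-- First coordinate of the generalized Hammersley point: `z₁ = tₙ/b + ⋯ + t₁/bⁿ`. -/
noncomputable def z1 (b n : ℕ) (t : Fin n → Fin b) : ℝ :=
  ∑ i : Fin n, ((t i : ℕ) : ℝ) / (b:ℝ) ^ (n - (i:ℕ))

/-- Second coordinate: `z₂ = s₁(t₁)/b + s₂(t₂)/b² + ⋯ + sₙ(tₙ)/bⁿ`. -/
noncomputable def z2 (b n : ℕ) (s : Fin n → ℕ → ℕ) (t : Fin n → Fin b) : ℝ :=
  ∑ i : Fin n, ((s i (t i : ℕ) : ℕ) : ℝ) / (b:ℝ) ^ ((i:ℕ) + 1)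

/-- Each `s i` is either the identity or the reflection `t ↦ b−1−t` on digits. -/
def IsDigitMaps (b n : ℕ) (s : Fin n → ℕ → ℕ) : Prop :=
  ∀ i, (∀ k, k < b → s i k = k) ∨ (∀ k, k < b → s i k = b - 1 - k)

/-- The discrepancy function of the generalized Hammersley point set. -/
noncomputable def disc (b n : ℕ) (s : Fin n → ℕ → ℕ) (x₁ x₂ : ℝ) : ℝ :=
  (b:ℝ) ^ (-(n:ℤ)) *
      ∑ t : Fin n → Fin b,
        (if z1 b n t < x₁ then (1:ℝ) else 0) * (if z2 b n s t < x₂ then (1:ℝ) else 0)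
    - x₁ * x₂

/-- The `b`-adic Haar coefficient `μ_{j,m,ℓ}` of the discrepancy function. -/
noncomputable def mu (b n : ℕ) (s : Fin n → ℕ → ℕ) (j₁ j₂ m₁ m₂ ℓ₁ ℓ₂ : ℕ) : ℂ :=
  ∫ x₁ in Set.Ico (0:ℝ) 1, ∫ x₂ in Set.Ico (0:ℝ) 1,
    ((disc b n s x₁ x₂ : ℝ) : ℂ) * haar b j₁ m₁ ℓ₁ x₁ * haar b j₂ m₂ ℓ₂ x₂



lemma bexp_eq_pow (b ℓ k : ℕ) : bexp b ℓ k = bexp b ℓ 1 ^ k := by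
  rw [bexp, bexp, ← Complex.exp_nat_mul]
  congr 1
  push_cast
  ring

lemma abs_bexp (b ℓ k : ℕ) : ‖bexp b ℓ k‖ = 1 := by
  have h : (2 * Real.pi * Complex.I * ℓ * k / b : ℂ)
      = ((2 * Real.pi * ℓ * k / b : ℝ) : ℂ) * Complex.I := by
    push_cast; ring
  rw [bexp, h, Complex.norm_exp_ofReal_mul_I]

lemma bexp_ne_one {b ℓ : ℕ} (hb : 2 ≤ b) (h1 : 1 ≤ ℓ) (h2 : ℓ ≤ b - 1) :
    bexp b ℓ 1 ≠ 1 := by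
  intro h
  rw [bexp, Complex.exp_eq_one_iff] at h
  obtain ⟨n, hn⟩ := h
  have hb0 : (b:ℂ) ≠ 0 := by
    simpa using (by omega : b ≠ 0)
  have hπ : (2 * (Real.pi:ℂ) * Complex.I) ≠ 0 := by
    simp [Real.pi_ne_zero, Complex.I_ne_zero]
  have key : (ℓ:ℂ) = (n:ℂ) * b := by
    field_simp at hn
    have := hn
    -- hn : 2 * π * I * ℓ = n * (2 * π * I) * b  (hopefully)
    have h2' : (2 * (Real.pi:ℂ) * Complex.I) * ℓ = (2 * (Real.pi:ℂ) * Complex.I) * ((n:ℂ) * b) := by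
      linear_combination (2 * (Real.pi:ℂ) * Complex.I) * hn
    exact mul_left_cancel₀ hπ h2'
  have key2 : (ℓ:ℤ) = n * b := by exact_mod_cast key
  have hbz : (2:ℤ) ≤ b := by exact_mod_cast hb
  have hl1 : (1:ℤ) ≤ ℓ := by exact_mod_cast h1
  have hl2 : (ℓ:ℤ) ≤ (b:ℤ) - 1 := by
    have : (ℓ:ℕ) ≤ b - 1 := h2
    omega
  rcases le_or_gt n 0 with hn0 | hn0
  · nlinarith
  · have : (1:ℤ) ≤ n := hn0
    nlinarith

lemma bexp_pow_b {b ℓ : ℕ} (hb : 2 ≤ b) : bexp b ℓ 1 ^ b = 1 := by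
  rw [← bexp_eq_pow, bexp]
  have hb0 : (b:ℂ) ≠ 0 := by simpa using (by omega : b ≠ 0)
  have : (2 * Real.pi * Complex.I * ℓ * b / b : ℂ) = (ℓ:ℤ) * (2 * Real.pi * Complex.I) := by
    rw [mul_div_assoc, div_self hb0, mul_one]; push_cast; ring
  rw [this, Complex.exp_int_mul_two_pi_mul_I]

lemma sum_bexp {b ℓ : ℕ} (hb : 2 ≤ b) (h1 : 1 ≤ ℓ) (h2 : ℓ ≤ b - 1) :
    ∑ k ∈ range b, bexp b ℓ k = 0 := by
  have hne := bexp_ne_one hb h1 h2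
  have h : ∑ k ∈ range b, bexp b ℓ k = ∑ k ∈ range b, bexp b ℓ 1 ^ k :=
    Finset.sum_congr rfl fun k _ => bexp_eq_pow b ℓ k
  rw [h, geom_sum_eq hne, bexp_pow_b hb]
  simp

lemma sum_mul_pow_aux (x : ℂ) (N : ℕ) :
    (x - 1) * ∑ k ∈ range N, (k:ℂ) * x ^ k
      = (N:ℂ) * x ^ N - x ^ N - (∑ k ∈ range N, x ^ k) + 1 := by
  induction N with
  | zero => simp
  | succ N ih =>
    rw [sum_range_succ, sum_range_succ (f := fun k => x ^ k), mul_add, ih]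
    push_cast
    ring

lemma sum_k_bexp {b ℓ : ℕ} (hb : 2 ≤ b) (h1 : 1 ≤ ℓ) (h2 : ℓ ≤ b - 1) :
    ∑ k ∈ range b, (k:ℂ) * bexp b ℓ k = (b:ℂ) / (bexp b ℓ 1 - 1) := by
  have hne : bexp b ℓ 1 - 1 ≠ 0 := sub_ne_zero.2 (bexp_ne_one hb h1 h2)
  rw [eq_div_iff hne]
  have h : ∑ k ∈ range b, (k:ℂ) * bexp b ℓ k = ∑ k ∈ range b, (k:ℂ) * bexp b ℓ 1 ^ k :=
    Finset.sum_congr rfl fun k _ => by rw [bexp_eq_pow]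
  rw [h, mul_comm, sum_mul_pow_aux, bexp_pow_b hb]
  have h2' : ∑ k ∈ range b, bexp b ℓ 1 ^ k = 0 := by
    have := sum_bexp hb h1 h2
    rwa [Finset.sum_congr rfl fun k _ => bexp_eq_pow b ℓ k] at this
  rw [h2']
  ring


/-- left endpoint of the `k`-th subinterval -/
noncomputable def lep (b j m k : ℕ) : ℝ := ((b:ℝ)^(j+1))⁻¹ * ((b:ℝ)*m + k)

section lep
variable {b j m : ℕ}

lemma bposR (hb : 2 ≤ b) : (0:ℝ) < b := by
  have : 0 < b := by omega
  exact_mod_cast this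

lemma lep_succ (hb : 2 ≤ b) (k : ℕ) :
    lep b j m (k+1) = lep b j m k + ((b:ℝ)^(j+1))⁻¹ := by
  unfold lep; push_cast; ring

lemma lep_nonneg (hb : 2 ≤ b) (k : ℕ) : 0 ≤ lep b j m k := by
  have := bposR (b := b) hb
  unfold lep
  positivity

lemma lep_mono (hb : 2 ≤ b) {k k' : ℕ} (h : k ≤ k') : lep b j m k ≤ lep b j m k' := by
  have hbp := bposR (b := b) hb
  unfold lep
  have : ((k:ℝ)) ≤ (k':ℝ) := by exact_mod_cast h
  have hp : (0:ℝ) < ((b:ℝ)^(j+1))⁻¹ := by positivity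
  nlinarith

lemma lep_zero (hb : 2 ≤ b) : lep b j m 0 = ((b:ℝ)^j)⁻¹ * m := by
  have hbp := bposR (b := b) hb
  unfold lep
  field_simp
  ring

lemma lep_b (hb : 2 ≤ b) : lep b j m b = ((b:ℝ)^j)⁻¹ * (m + 1) := by
  have hbp := bposR (b := b) hb
  unfold lep
  field_simp
  ring

lemma lep_le_one (hb : 2 ≤ b) (hm : m < b^j) {k : ℕ} (hk : k ≤ b) : lep b j m k ≤ 1 := by
  refine (lep_mono hb hk).trans ?_
  rw [lep_b hb]
  have hbp := bposR (b := b) hb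
  have hm' : (m:ℝ) + 1 ≤ (b:ℝ)^j := by
    have : (m+1 : ℕ) ≤ b^j := hm
    exact_mod_cast this
  rw [inv_mul_le_iff₀ (by positivity)]
  linarith

lemma haar_eq_indicator (b j m ℓ : ℕ) (x : ℝ) :
    haar b j m ℓ x
      = ∑ k ∈ range b,
          (Set.Ico (lep b j m k) (lep b j m (k+1))).indicator (fun _ => bexp b ℓ k) x := by
  unfold haar
  refine Finset.sum_congr rfl fun k _ => ?_
  rw [Set.indicator_apply]
  congr 1
  simp only [Set.mem_Ico, lep, eq_iff_iff]
  constructor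
  · rintro ⟨h1, h2⟩
    exact ⟨h1, by push_cast; push_cast at h2; linarith⟩
  · rintro ⟨h1, h2⟩
    exact ⟨h1, by push_cast; push_cast at h2; linarith⟩

end lep

section pieces

/-- unit interval -/
notation "Su" => Set.Ico (0:ℝ) 1

lemma integrable_ind (u v : ℝ) (c : ℂ) (μ : MeasureTheory.Measure ℝ) [IsFiniteMeasure μ] :
    Integrable ((Set.Ico u v).indicator (fun _ => c)) μ := by
  rw [integrable_indicator_iff measurableSet_Ico]
  exact integrableOn_const (measure_lt_top μ _).ne

lemma ind_subset_S {u v : ℝ} (hu : 0 ≤ u) (hv : v ≤ 1) : Set.Ico u v ⊆ Su :=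
  fun x hx => ⟨le_trans hu hx.1, lt_of_lt_of_le hx.2 hv⟩

lemma piece_int_const {u v : ℝ} (hu : 0 ≤ u) (huv : u ≤ v) (hv : v ≤ 1) (c : ℂ) :
    ∫ x in Su, (Set.Ico u v).indicator (fun _ => c) x = ((v - u : ℝ) : ℂ) * c := by
  rw [setIntegral_indicator measurableSet_Ico,
    Set.inter_eq_self_of_subset_right (ind_subset_S hu hv), setIntegral_const,
    Real.volume_real_Ico_of_le huv]
  rw [Complex.real_smul]

lemma piece_int_id {u v : ℝ} (hu : 0 ≤ u) (huv : u ≤ v) (hv : v ≤ 1) (c : ℂ) :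
    ∫ x in Su, (x:ℂ) * (Set.Ico u v).indicator (fun _ => c) x
      = (((v^2 - u^2)/2 : ℝ) : ℂ) * c := by
  have h1 : (fun x : ℝ => (x:ℂ) * (Set.Ico u v).indicator (fun _ => c) x)
      = (Set.Ico u v).indicator (fun x : ℝ => (x:ℂ) * c) := by
    funext x
    by_cases hx : x ∈ Set.Ico u v <;> simp [Set.indicator_apply, hx]
  rw [h1, setIntegral_indicator measurableSet_Ico,
    Set.inter_eq_self_of_subset_right (ind_subset_S hu hv)]
  rw [integral_mul_const]
  congr 1
  have h2 : ∫ x in Set.Ico u v, (x:ℂ) = ((∫ x in Set.Ico u v, x : ℝ) : ℂ) := integral_ofReal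
  rw [h2]
  congr 1
  rw [Measure.restrict_congr_set Ico_ae_eq_Ioc, ← intervalIntegral.integral_of_le huv,
    integral_id]

lemma piece_int_chi {u v : ℝ} (hu : 0 ≤ u) (huv : u ≤ v) (hv : v ≤ 1) (c : ℂ) (p : ℝ) :
    ∫ x in Su, (if p < x then (1:ℂ) else 0) * (Set.Ico u v).indicator (fun _ => c) x
      = ((volume (Set.Ico u v ∩ Set.Ioi p)).toReal : ℂ) * c := by
  have h1 : (fun x : ℝ => (if p < x then (1:ℂ) else 0) * (Set.Ico u v).indicator (fun _ => c) x)
      = (Set.Ico u v ∩ Set.Ioi p).indicator (fun _ => c) := by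
    funext x
    by_cases hx : x ∈ Set.Ico u v <;> by_cases hp : p < x <;>
      simp [Set.indicator_apply, hx, hp, Set.mem_Ioi]
  rw [h1, setIntegral_indicator (measurableSet_Ico.inter measurableSet_Ioi),
    Set.inter_eq_self_of_subset_right
      ((Set.inter_subset_left).trans (ind_subset_S hu hv)),
    setIntegral_const, Complex.real_smul]
  rfl

lemma vol_toReal_eq_of_lt {u v p : ℝ} (huv : u ≤ v) (h : p < u) :
    (volume (Set.Ico u v ∩ Set.Ioi p)).toReal = v - u := by
  have : Set.Ico u v ∩ Set.Ioi p = Set.Ico u v := by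
    apply Set.inter_eq_self_of_subset_left
    intro x hx
    exact lt_of_lt_of_le h hx.1
  rw [this, Real.volume_Ico, ENNReal.toReal_ofReal (by linarith)]

lemma vol_toReal_eq_zero {u v p : ℝ} (h : v ≤ p) :
    (volume (Set.Ico u v ∩ Set.Ioi p)).toReal = 0 := by
  have : Set.Ico u v ∩ Set.Ioi p = ∅ := by
    ext x
    simp only [Set.mem_inter_iff, Set.mem_Ico, Set.mem_Ioi, Set.mem_empty_iff_false, iff_false]
    rintro ⟨⟨-, h2⟩, h3⟩
    linarith
  simp [this]

lemma vol_toReal_le {u v p : ℝ} (huv : u ≤ v) :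
    (volume (Set.Ico u v ∩ Set.Ioi p)).toReal ≤ v - u := by
  have h1 : volume (Set.Ico u v ∩ Set.Ioi p) ≤ volume (Set.Ico u v) :=
    measure_mono Set.inter_subset_left
  have h2 := h1.trans_lt (measure_Ico_lt_top (a := u) (b := v))
  calc (volume (Set.Ico u v ∩ Set.Ioi p)).toReal
      ≤ (volume (Set.Ico u v)).toReal := ENNReal.toReal_mono (measure_Ico_lt_top).ne h1
    _ = v - u := by rw [Real.volume_Ico, ENNReal.toReal_ofReal (by linarith)]

lemma vol_toReal_nonneg (u v p : ℝ) : 0 ≤ (volume (Set.Ico u v ∩ Set.Ioi p)).toReal :=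
  ENNReal.toReal_nonneg

end pieces

section haarInt

noncomputable def Aint (b j m ℓ : ℕ) (p : ℝ) : ℂ :=
  ∫ x in Su, (if p < x then (1:ℂ) else 0) * haar b j m ℓ x

noncomputable def Wint (b j m ℓ : ℕ) : ℂ :=
  ∫ x in Su, (x:ℂ) * haar b j m ℓ x

variable {b j m ℓ : ℕ}

lemma integrable_haar (b j m ℓ : ℕ) (μ : Measure ℝ) [IsFiniteMeasure μ] :
    Integrable (haar b j m ℓ) μ := by
  have : haar b j m ℓ = fun x => ∑ k ∈ range b,
      (Set.Ico (lep b j m k) (lep b j m (k+1))).indicator (fun _ => bexp b ℓ k) x := by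
    funext x; exact haar_eq_indicator b j m ℓ x
  rw [this]
  exact integrable_finset_sum _ fun k _ => integrable_ind _ _ _ μ

lemma aesm_chi (p : ℝ) (μ : Measure ℝ) :
    AEStronglyMeasurable (fun x : ℝ => if p < x then (1:ℂ) else 0) μ := by
  have : Measurable (fun x : ℝ => if p < x then (1:ℂ) else 0) :=
    Measurable.ite (measurableSet_Ioi (a := p)) measurable_const measurable_const
  exact this.aestronglyMeasurable

lemma integrable_chi_haar (p : ℝ) (μ : Measure ℝ) [IsFiniteMeasure μ] :
    Integrable (fun x => (if p < x then (1:ℂ) else 0) * haar b j m ℓ x) μ := by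
  refine (integrable_haar b j m ℓ μ).bdd_mul (c := 1) (aesm_chi p μ) (ae_of_all _ fun x => ?_)
  by_cases h : p < x <;> simp [h]

lemma integrable_id_haar (b j m ℓ : ℕ) :
    Integrable (fun x : ℝ => (x:ℂ) * haar b j m ℓ x) (volume.restrict Su) := by
  refine Integrable.bdd_mul (c := 1) (integrable_haar b j m ℓ _)
    (Complex.continuous_ofReal.measurable.aestronglyMeasurable) ?_
  refine (ae_restrict_iff' measurableSet_Ico).2 (ae_of_all _ fun x hx => ?_)
  rw [Complex.norm_real]
  rw [Real.norm_eq_abs, abs_le]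
  constructor <;> [linarith [hx.1]; linarith [hx.2]]

lemma Aint_eq (hb : 2 ≤ b) (p : ℝ) (hm : m < b ^ j) :
    Aint b j m ℓ p = ∑ k ∈ range b,
      ((volume (Set.Ico (lep b j m k) (lep b j m (k+1)) ∩ Set.Ioi p)).toReal : ℂ)
        * bexp b ℓ k := by
  unfold Aint
  have h1 : ∀ x : ℝ, (if p < x then (1:ℂ) else 0) * haar b j m ℓ x
      = ∑ k ∈ range b, (if p < x then (1:ℂ) else 0) *
          (Set.Ico (lep b j m k) (lep b j m (k+1))).indicator (fun _ => bexp b ℓ k) x := by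
    intro x
    rw [haar_eq_indicator, Finset.mul_sum]
  rw [integral_congr_ae (ae_of_all _ h1)]
  rw [integral_finset_sum _ fun k _ => by
    refine (integrable_ind _ _ _ _).bdd_mul (c := 1) (aesm_chi p _) (ae_of_all _ fun x => ?_)
    by_cases h : p < x <;> simp [h]]
  refine Finset.sum_congr rfl fun k hk => ?_
  rw [Finset.mem_range] at hk
  exact piece_int_chi (lep_nonneg hb k) (lep_mono hb (Nat.le_succ k))
    (lep_le_one hb hm hk) _ p

lemma norm_Aint_le (hb : 2 ≤ b) (hm : m < b ^ j) (p : ℝ) :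
    ‖Aint b j m ℓ p‖ ≤ ((b:ℝ)^j)⁻¹ := by
  rw [Aint_eq hb p hm]
  have hbp := bposR (b := b) hb
  calc ‖∑ k ∈ range b, ((volume (Set.Ico (lep b j m k) (lep b j m (k+1)) ∩ Set.Ioi p)).toReal : ℂ)
        * bexp b ℓ k‖
      ≤ ∑ k ∈ range b, ‖((volume (Set.Ico (lep b j m k) (lep b j m (k+1)) ∩ Set.Ioi p)).toReal : ℂ)
        * bexp b ℓ k‖ := norm_sum_le _ _
    _ ≤ ∑ k ∈ range b, ((b:ℝ)^(j+1))⁻¹ := by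
        refine Finset.sum_le_sum fun k _ => ?_
        rw [norm_mul, abs_bexp, mul_one, Complex.norm_real,
          Real.norm_eq_abs, abs_of_nonneg (vol_toReal_nonneg _ _ _)]
        have hle := vol_toReal_le (u := lep b j m k) (v := lep b j m (k+1)) (p := p)
          (lep_mono hb (Nat.le_succ k))
        have hs := lep_succ (b := b) (j := j) (m := m) hb k
        linarith
    _ = ((b:ℝ)^j)⁻¹ := by
        rw [Finset.sum_const, Finset.card_range, nsmul_eq_mul]
        field_simp
        ring

lemma Aint_eq_zero_left (hb : 2 ≤ b) (h1 : 1 ≤ ℓ) (h2 : ℓ ≤ b - 1) (hm : m < b ^ j)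
    {p : ℝ} (hp : p < ((b:ℝ)^j)⁻¹ * m) : Aint b j m ℓ p = 0 := by
  rw [Aint_eq hb p hm]
  have h3 : ∀ k ∈ range b,
      ((volume (Set.Ico (lep b j m k) (lep b j m (k+1)) ∩ Set.Ioi p)).toReal : ℂ) * bexp b ℓ k
      = ((b:ℝ)^(j+1))⁻¹ * bexp b ℓ k := by
    intro k _
    congr 2
    rw [vol_toReal_eq_of_lt (lep_mono hb (Nat.le_succ k))
      (lt_of_lt_of_le (by rw [← lep_zero (m := m) hb] at hp; exact hp) (lep_mono hb (Nat.zero_le k))),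
      lep_succ hb]
    ring
  rw [Finset.sum_congr rfl h3, ← Finset.mul_sum, sum_bexp hb h1 h2, mul_zero]

lemma Aint_eq_zero_right (hb : 2 ≤ b) (hm : m < b ^ j)
    {p : ℝ} (hp : ((b:ℝ)^j)⁻¹ * (m+1) ≤ p) : Aint b j m ℓ p = 0 := by
  rw [Aint_eq hb p hm]
  refine Finset.sum_eq_zero fun k hk => ?_
  rw [Finset.mem_range] at hk
  have h4 : lep b j m (k+1) ≤ p := by
    refine le_trans ?_ hp
    rw [← lep_b (m := m) hb]
    exact lep_mono hb hk
  rw [vol_toReal_eq_zero h4]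
  simp

lemma Wint_eq (hb : 2 ≤ b) (h1 : 1 ≤ ℓ) (h2 : ℓ ≤ b - 1) (hm : m < b ^ j) :
    Wint b j m ℓ = (((b:ℂ)^(j+1))⁻¹)^2 * ((b:ℂ) / (bexp b ℓ 1 - 1)) := by
  unfold Wint
  have h1' : ∀ x : ℝ, (x:ℂ) * haar b j m ℓ x
      = ∑ k ∈ range b, (x:ℂ) *
          (Set.Ico (lep b j m k) (lep b j m (k+1))).indicator (fun _ => bexp b ℓ k) x := by
    intro x
    rw [haar_eq_indicator, Finset.mul_sum]
  rw [integral_congr_ae (ae_of_all _ h1')]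
  rw [integral_finset_sum _ fun k _ => by
    refine Integrable.bdd_mul (c := 1) (integrable_ind _ _ _ _)
      (Complex.continuous_ofReal.measurable.aestronglyMeasurable) ?_
    refine (ae_restrict_iff' measurableSet_Ico).2 (ae_of_all _ fun x hx => ?_)
    rw [Complex.norm_real, Real.norm_eq_abs, abs_le]
    constructor <;> [linarith [hx.1]; linarith [hx.2]]]
  have hstep : ∀ k ∈ range b,
      (∫ x in Su, (x:ℂ) *
        (Set.Ico (lep b j m k) (lep b j m (k+1))).indicator (fun _ => bexp b ℓ k) x)
      = (((b:ℂ)^(j+1))⁻¹)^2 * ((((b:ℂ)*m + 1/2) * bexp b ℓ k) + (k:ℂ) * bexp b ℓ k) := by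
    intro k hk
    rw [Finset.mem_range] at hk
    rw [piece_int_id (lep_nonneg hb k) (lep_mono hb (Nat.le_succ k)) (lep_le_one hb hm hk)]
    have hreal : (lep b j m (k+1)^2 - lep b j m k^2)/2
        = (((b:ℝ)^(j+1))⁻¹)^2 * ((((b:ℝ)*m + 1/2)) + k) := by
      unfold lep; push_cast; ring
    rw [hreal]
    push_cast
    ring
  rw [Finset.sum_congr rfl hstep, ← Finset.mul_sum]
  congr 1
  rw [Finset.sum_add_distrib, ← Finset.mul_sum, sum_bexp hb h1 h2, sum_k_bexp hb h1 h2]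
  ring

end haarInt






section mueq
variable {b : ℕ} (hb : 2 ≤ b)

lemma mu_eq (hb : 2 ≤ b) (n : ℕ) (s : Fin n → ℕ → ℕ) (j₁ j₂ m₁ m₂ ℓ₁ ℓ₂ : ℕ) :
    mu b n s j₁ j₂ m₁ m₂ ℓ₁ ℓ₂
      = (b:ℂ)^(-(n:ℤ)) *
          (∑ t : Fin n → Fin b, Aint b j₁ m₁ ℓ₁ (z1 b n t) * Aint b j₂ m₂ ℓ₂ (z2 b n s t))
        - Wint b j₁ m₁ ℓ₁ * Wint b j₂ m₂ ℓ₂ := by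
  have key : ∀ x₁ : ℝ,
      (∫ x₂ in Su, ((disc b n s x₁ x₂ : ℝ):ℂ) * haar b j₁ m₁ ℓ₁ x₁ * haar b j₂ m₂ ℓ₂ x₂)
      = (∑ t : Fin n → Fin b, (b:ℂ)^(-(n:ℤ)) *
            (((if z1 b n t < x₁ then (1:ℂ) else 0) * haar b j₁ m₁ ℓ₁ x₁)
              * Aint b j₂ m₂ ℓ₂ (z2 b n s t)))
        - ((x₁:ℂ) * haar b j₁ m₁ ℓ₁ x₁) * Wint b j₂ m₂ ℓ₂ := by
    intro x₁
    have hfun : ∀ x₂ : ℝ,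
        ((disc b n s x₁ x₂ : ℝ):ℂ) * haar b j₁ m₁ ℓ₁ x₁ * haar b j₂ m₂ ℓ₂ x₂
        = (∑ t : Fin n → Fin b, ((b:ℂ)^(-(n:ℤ)) *
              ((if z1 b n t < x₁ then (1:ℂ) else 0) * haar b j₁ m₁ ℓ₁ x₁)) *
              ((if z2 b n s t < x₂ then (1:ℂ) else 0) * haar b j₂ m₂ ℓ₂ x₂))
          - ((x₁:ℂ) * haar b j₁ m₁ ℓ₁ x₁) * ((x₂:ℂ) * haar b j₂ m₂ ℓ₂ x₂) := by
      intro x₂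
      have hcast : ((disc b n s x₁ x₂ : ℝ):ℂ)
          = (b:ℂ)^(-(n:ℤ)) * (∑ t : Fin n → Fin b,
              (if z1 b n t < x₁ then (1:ℂ) else 0) * (if z2 b n s t < x₂ then (1:ℂ) else 0))
            - (x₁:ℂ)*(x₂:ℂ) := by
        unfold disc
        push_cast [apply_ite (Complex.ofReal)]
        ring
      rw [hcast, sub_mul, sub_mul]
      congr 1
      · rw [Finset.mul_sum, Finset.sum_mul, Finset.sum_mul]
        exact Finset.sum_congr rfl fun t _ => by ring
      · ring
    rw [integral_congr_ae (ae_of_all _ hfun)]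
    rw [integral_sub
      (integrable_finset_sum _ fun t _ =>
        (integrable_chi_haar (z2 b n s t) _).const_mul _)
      ((integrable_id_haar b j₂ m₂ ℓ₂).const_mul _)]
    rw [integral_finset_sum _ fun t _ => (integrable_chi_haar (z2 b n s t) _).const_mul _]
    congr 1
    · exact Finset.sum_congr rfl fun t _ => by
        rw [integral_const_mul, mul_assoc]
        rfl
    · rw [integral_const_mul]
      rfl
  unfold mu
  rw [integral_congr_ae (ae_of_all _ key)]
  rw [integral_sub
    (integrable_finset_sum _ fun t _ =>
      (((integrable_chi_haar (z1 b n t) _).mul_const _).const_mul _))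
    ((integrable_id_haar b j₁ m₁ ℓ₁).mul_const _)]
  rw [integral_finset_sum _ fun t _ =>
    (((integrable_chi_haar (z1 b n t) _).mul_const _).const_mul _)]
  congr 1
  · rw [Finset.mul_sum]
    refine Finset.sum_congr rfl fun t _ => ?_
    rw [integral_const_mul, integral_mul_const]
    rfl
  · rw [integral_mul_const]
    rfl

end mueq

section digits
variable {b : ℕ}

noncomputable def bval (b m : ℕ) (c : ℕ → ℕ) : ℝ := ∑ k ∈ range m, (c k : ℝ) / (b:ℝ)^(k+1)

lemma val_nonneg (b m : ℕ) (c : ℕ → ℕ) : 0 ≤ bval b m c := by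
  refine Finset.sum_nonneg fun k _ => ?_
  positivity

lemma val_succ (b m : ℕ) (c : ℕ → ℕ) :
    bval b (m+1) c = bval b m c + (c m : ℝ) / (b:ℝ)^(m+1) := by
  rw [bval, bval, sum_range_succ]

lemma val_le (hb : 2 ≤ b) {m : ℕ} {c : ℕ → ℕ} (hc : ∀ k < m, c k < b) :
    bval b m c ≤ 1 - ((b:ℝ)^m)⁻¹ := by
  induction m with
  | zero => simp [bval]
  | succ m ih =>
    have ih' := ih (fun k hk => hc k (by omega))
    rw [val_succ]
    have hbp := bposR (b := b) hb
    have h1 : (c m : ℝ) ≤ (b:ℝ) - 1 := by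
      have h0 : c m + 1 ≤ b := hc m (by omega)
      have h0' : ((c m : ℕ) : ℝ) + 1 ≤ (b:ℝ) := by exact_mod_cast h0
      linarith
    have hpow : (0:ℝ) < (b:ℝ)^(m+1) := by positivity
    have h2 : (c m : ℝ) / (b:ℝ)^(m+1) ≤ ((b:ℝ) - 1) / (b:ℝ)^(m+1) := by gcongr
    have key : (1 - ((b:ℝ)^m)⁻¹) + ((b:ℝ) - 1)/(b:ℝ)^(m+1) = 1 - ((b:ℝ)^(m+1))⁻¹ := by
      field_simp
      ring
    linarith

lemma val_lt_one (hb : 2 ≤ b) {m : ℕ} {c : ℕ → ℕ} (hc : ∀ k < m, c k < b) :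
    bval b m c < 1 := by
  have h := val_le hb hc
  have hbp := bposR (b := b) hb
  have : (0:ℝ) < ((b:ℝ)^m)⁻¹ := by positivity
  linarith

lemma val_split (hb : 2 ≤ b) {j m : ℕ} (hj : j ≤ m) (c : ℕ → ℕ) :
    (b:ℝ)^j * bval b m c
      = ((∑ k ∈ range j, c k * b^(j-1-k) : ℕ) : ℝ) + bval b (m-j) (fun k => c (j+k)) := by
  have hbp := bposR (b := b) hb
  have hm : m = j + (m - j) := by omega
  rw [bval, hm, Finset.sum_range_add, mul_add, Finset.mul_sum, Finset.mul_sum]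
  congr 1
  · push_cast
    refine Finset.sum_congr rfl fun k hk => ?_
    rw [Finset.mem_range] at hk
    have hsplit : j = (j-1-k) + (k+1) := by omega
    rw [hsplit, pow_add]
    field_simp
    ring_nf; congr 2; omega
  · rw [bval]
    refine Finset.sum_congr (by rw [Nat.add_sub_cancel_left]) fun k _ => ?_
    rw [show j + k + 1 = j + (k+1) by ring, pow_add]
    field_simp

lemma val_floor (hb : 2 ≤ b) {j m : ℕ} (hj : j ≤ m) {c : ℕ → ℕ} (hc : ∀ k < m, c k < b) :
    ⌊(b:ℝ)^j * bval b m c⌋₊ = ∑ k ∈ range j, c k * b^(j-1-k) := by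
  rw [val_split hb hj]
  have hnn : 0 ≤ ((∑ k ∈ range j, c k * b^(j-1-k) : ℕ) : ℝ) + bval b (m-j) (fun k => c (j+k)) :=
    add_nonneg (Nat.cast_nonneg _) (val_nonneg _ _ _)
  rw [Nat.floor_eq_iff hnn]
  refine ⟨le_add_of_nonneg_right (val_nonneg _ _ _), ?_⟩
  have hlt : bval b (m-j) (fun k => c (j+k)) < 1 :=
    val_lt_one hb (fun k hk => hc (j+k) (by omega))
  linarith

lemma digits_inj (hb : 2 ≤ b) :
    ∀ (r : ℕ) (f g : ℕ → ℕ), (∀ i < r, f i < b) → (∀ i < r, g i < b) →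
      (∑ i ∈ range r, f i * b^i) = (∑ i ∈ range r, g i * b^i) → ∀ i < r, f i = g i := by
  intro r
  induction r with
  | zero => intro f g _ _ _ i hi; omega
  | succ r ih =>
    intro f g hf hg hsum i hi
    have hpeel : ∀ h : ℕ → ℕ,
        ∑ i ∈ range (r+1), h i * b^i = b * (∑ i ∈ range r, h (i+1) * b^i) + h 0 := by
      intro h
      rw [sum_range_succ' (fun i => h i * b^i) r, Finset.mul_sum]
      simp only [pow_zero, mul_one]
      congr 1
      exact Finset.sum_congr rfl fun k _ => by ring
    rw [hpeel f, hpeel g] at hsum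
    have h0 : f 0 = g 0 := by
      have h1 := congrArg (· % b) hsum
      simpa [Nat.mul_add_mod, Nat.mod_eq_of_lt (hf 0 (by omega)),
        Nat.mod_eq_of_lt (hg 0 (by omega))] using h1
    have hAB : (∑ i ∈ range r, f (i+1) * b^i) = ∑ i ∈ range r, g (i+1) * b^i := by
      have hb0 : 0 < b := by omega
      refine Nat.eq_of_mul_eq_mul_left hb0 ?_
      omega
    match i, hi with
    | 0, _ => exact h0
    | (i+1), hi =>
      exact ih (fun k => f (k+1)) (fun k => g (k+1)) (fun k hk => hf (k+1) (by omega))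
        (fun k hk => hg (k+1) (by omega)) hAB i (by omega)

lemma N_reflect (b j : ℕ) (c : ℕ → ℕ) :
    (∑ k ∈ range j, c k * b^(j-1-k)) = ∑ i ∈ range j, c (j-1-i) * b^i := by
  rw [← Finset.sum_range_reflect (fun i => c (j-1-i) * b^i) j]
  refine Finset.sum_congr rfl fun k hk => ?_
  rw [Finset.mem_range] at hk
  congr 2
  omega

lemma N_inj (hb : 2 ≤ b) {j : ℕ} {c c' : ℕ → ℕ}
    (hc : ∀ k < j, c k < b) (hc' : ∀ k < j, c' k < b)
    (h : (∑ k ∈ range j, c k * b^(j-1-k)) = ∑ k ∈ range j, c' k * b^(j-1-k)) :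
    ∀ k < j, c k = c' k := by
  rw [N_reflect, N_reflect] at h
  have H := digits_inj hb j (fun i => c (j-1-i)) (fun i => c' (j-1-i))
    (fun i hi => hc (j-1-i) (by omega)) (fun i hi => hc' (j-1-i) (by omega)) h
  intro k hk
  have h2 := H (j-1-k) (by omega)
  simpa [show j-1-(j-1-k) = k by omega] using h2

end digits

section zrep
variable {b n : ℕ}

/-- `k`-th digit of `t` (as natural number), `0` out of range. -/
def dg1 (b n : ℕ) (t : Fin n → Fin b) (k : ℕ) : ℕ :=
  if h : k < n then (t ⟨k, h⟩ : ℕ) else 0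

def dg2 (b n : ℕ) (s : Fin n → ℕ → ℕ) (t : Fin n → Fin b) (k : ℕ) : ℕ :=
  if h : k < n then s ⟨k, h⟩ (t ⟨k, h⟩ : ℕ) else 0

lemma dg1_lt (hb : 2 ≤ b) (t : Fin n → Fin b) (k : ℕ) : dg1 b n t k < b := by
  unfold dg1
  split
  · exact (t _).isLt
  · omega

lemma dg2_lt (hb : 2 ≤ b) {s : Fin n → ℕ → ℕ} (hs : IsDigitMaps b n s)
    (t : Fin n → Fin b) (k : ℕ) : dg2 b n s t k < b := by
  unfold dg2
  split
  · rcases hs ⟨k, by assumption⟩ with h | h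
    · rw [h _ (t _).isLt]; exact (t _).isLt
    · rw [h _ (t _).isLt]; omega
  · omega

lemma z1_eq_bval (hb : 2 ≤ b) (hn : 1 ≤ n) (t : Fin n → Fin b) :
    z1 b n t = bval b n (fun k => dg1 b n t (n-1-k)) := by
  have h1 : z1 b n t = ∑ k ∈ range n, (dg1 b n t k : ℝ)/(b:ℝ)^(n-k) := by
    rw [z1, ← Fin.sum_univ_eq_sum_range (fun k => (dg1 b n t k : ℝ)/(b:ℝ)^(n-k)) n]
    refine Finset.sum_congr rfl fun i _ => ?_
    unfold dg1
    rw [dif_pos i.isLt]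
  rw [h1, ← Finset.sum_range_reflect (fun k => (dg1 b n t k : ℝ)/(b:ℝ)^(n-k)) n, bval]
  refine Finset.sum_congr rfl fun k hk => ?_
  rw [Finset.mem_range] at hk
  rw [show n - (n-1-k) = k+1 by omega]

lemma z2_eq_bval (hb : 2 ≤ b) (s : Fin n → ℕ → ℕ) (t : Fin n → Fin b) :
    z2 b n s t = bval b n (dg2 b n s t) := by
  rw [z2, bval, ← Fin.sum_univ_eq_sum_range (fun k => (dg2 b n s t k : ℝ)/(b:ℝ)^(k+1)) n]
  refine Finset.sum_congr rfl fun i _ => ?_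
  unfold dg2
  rw [dif_pos i.isLt]

lemma z1_nonneg (t : Fin n → Fin b) : 0 ≤ z1 b n t :=
  Finset.sum_nonneg fun i _ => by positivity

lemma z2_nonneg (s : Fin n → ℕ → ℕ) (t : Fin n → Fin b) : 0 ≤ z2 b n s t :=
  Finset.sum_nonneg fun i _ => by positivity

lemma z1_floor (hb : 2 ≤ b) (hn : 1 ≤ n) {j : ℕ} (hj : j ≤ n) (t : Fin n → Fin b) :
    ⌊(b:ℝ)^j * z1 b n t⌋₊ = ∑ k ∈ range j, dg1 b n t (n-1-k) * b^(j-1-k) := by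
  rw [z1_eq_bval hb hn t, val_floor hb hj (fun k _ => dg1_lt hb t _)]

lemma z2_floor (hb : 2 ≤ b) {s : Fin n → ℕ → ℕ} (hs : IsDigitMaps b n s)
    {j : ℕ} (hj : j ≤ n) (t : Fin n → Fin b) :
    ⌊(b:ℝ)^j * z2 b n s t⌋₊ = ∑ k ∈ range j, dg2 b n s t k * b^(j-1-k) := by
  rw [z2_eq_bval hb s t, val_floor hb hj (fun k _ => dg2_lt hb hs t _)]

lemma fiber_det (hb : 2 ≤ b) (hn : 1 ≤ n) {j₁ j₂ : ℕ} (hj₁ : j₁ ≤ n) (hj₂ : j₂ ≤ n)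
    {s : Fin n → ℕ → ℕ} (hs : IsDigitMaps b n s) {t t' : Fin n → Fin b}
    (h1 : ⌊(b:ℝ)^j₁ * z1 b n t⌋₊ = ⌊(b:ℝ)^j₁ * z1 b n t'⌋₊)
    (h2 : ⌊(b:ℝ)^j₂ * z2 b n s t⌋₊ = ⌊(b:ℝ)^j₂ * z2 b n s t'⌋₊)
    (i : Fin n) (hi : (i:ℕ) < j₂ ∨ n - j₁ ≤ (i:ℕ)) : t i = t' i := by
  rcases hi with hi | hi
  · rw [z2_floor hb hs hj₂ t, z2_floor hb hs hj₂ t'] at h2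
    have := N_inj hb (fun k _ => dg2_lt hb hs t k) (fun k _ => dg2_lt hb hs t' k) h2
      (i:ℕ) hi
    unfold dg2 at this
    rw [dif_pos i.isLt, dif_pos i.isLt] at this
    simp only [Fin.eta] at this
    rcases hs i with hcase | hcase
    · rw [hcase _ (t i).isLt, hcase _ (t' i).isLt] at this
      exact Fin.ext this
    · rw [hcase _ (t i).isLt, hcase _ (t' i).isLt] at this
      have h1' := (t i).isLt
      have h2' := (t' i).isLt
      exact Fin.ext (by omega)
  · rw [z1_floor hb hn hj₁ t, z1_floor hb hn hj₁ t'] at h1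
    have hk : n - 1 - (i:ℕ) < j₁ := by
      have := i.isLt
      omega
    have := N_inj hb (fun k _ => dg1_lt hb t _) (fun k _ => dg1_lt hb t' _) h1
      (n - 1 - (i:ℕ)) hk
    rw [show n - 1 - (n - 1 - (i:ℕ)) = (i:ℕ) by have := i.isLt; omega] at this
    unfold dg1 at this
    rw [dif_pos i.isLt, dif_pos i.isLt] at this
    simp only [Fin.eta] at this
    exact Fin.ext this

lemma fiber_card (hb : 2 ≤ b) (hn : 1 ≤ n) {j₁ j₂ : ℕ} (hj₁ : j₁ ≤ n) (hj₂ : j₂ ≤ n)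
    (hsum : n ≤ j₁ + j₂ + 1) {s : Fin n → ℕ → ℕ} (hs : IsDigitMaps b n s) (m₁ m₂ : ℕ) :
    (Finset.univ.filter (fun t : Fin n → Fin b =>
        ⌊(b:ℝ)^j₁ * z1 b n t⌋₊ = m₁ ∧ ⌊(b:ℝ)^j₂ * z2 b n s t⌋₊ = m₂)).card ≤ b := by
  classical
  have hmem : ∀ i : ↥(Finset.Ico j₂ (n - j₁)), (i : ℕ) < n := by
    intro i
    have h := Finset.mem_Ico.1 i.2
    omega
  calc (Finset.univ.filter (fun t : Fin n → Fin b =>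
        ⌊(b:ℝ)^j₁ * z1 b n t⌋₊ = m₁ ∧ ⌊(b:ℝ)^j₂ * z2 b n s t⌋₊ = m₂)).card
      ≤ (Finset.univ : Finset (↥(Finset.Ico j₂ (n - j₁)) → Fin b)).card := by
        refine Finset.card_le_card_of_injOn
          (fun t i => t ⟨(i:ℕ), hmem i⟩) (fun _ _ => Finset.mem_univ _) ?_
        intro t ht t' ht' heq
        rw [Finset.coe_filter] at ht ht'
        obtain ⟨-, ht1, ht2⟩ := ht
        obtain ⟨-, ht1', ht2'⟩ := ht'
        funext i
        by_cases hcase : (i:ℕ) < j₂ ∨ n - j₁ ≤ (i:ℕ)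
        · exact fiber_det hb hn hj₁ hj₂ hs (ht1.trans ht1'.symm) (ht2.trans ht2'.symm) i hcase
        · push_neg at hcase
          have hmem' : (i:ℕ) ∈ Finset.Ico j₂ (n - j₁) :=
            Finset.mem_Ico.2 ⟨hcase.1, hcase.2⟩
          have := congrFun heq ⟨(i:ℕ), hmem'⟩
          simpa using this
    _ = b ^ (Finset.Ico j₂ (n - j₁)).card := by
        rw [Finset.card_univ, Fintype.card_fun]
        simp
    _ ≤ b ^ 1 := by
        refine Nat.pow_le_pow_right (by omega) ?_
        rw [Nat.card_Ico]
        omega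
    _ = b := pow_one b

lemma Aint_vanish {j m ℓ : ℕ} (hb : 2 ≤ b) (h1 : 1 ≤ ℓ) (h2 : ℓ ≤ b - 1) (hm : m < b^j)
    {p : ℝ} (hp0 : 0 ≤ p) (hne : ⌊(b:ℝ)^j * p⌋₊ ≠ m) : Aint b j m ℓ p = 0 := by
  have hbp := bposR (b := b) hb
  have hpow : (0:ℝ) < (b:ℝ)^j := by positivity
  by_cases hlt : (b:ℝ)^j * p < m
  · refine Aint_eq_zero_left hb h1 h2 hm ?_
    rw [inv_mul_eq_div, lt_div_iff₀ hpow] at *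
    nlinarith
  · push_neg at hlt
    have hge : (m:ℝ) + 1 ≤ (b:ℝ)^j * p := by
      by_contra hcon
      push_neg at hcon
      exact hne ((Nat.floor_eq_iff (by positivity)).2 ⟨hlt, hcon⟩)
    refine Aint_eq_zero_right hb hm ?_
    rw [inv_mul_eq_div, div_le_iff₀ hpow]
    nlinarith

end zrep

lemma bexp_one_eq (b ℓ : ℕ) :
    bexp b ℓ 1 = Complex.exp (2 * Real.pi * Complex.I * ℓ / b) := by
  simp [bexp]

lemma abs_Wint_mul {b j₁ j₂ m₁ m₂ ℓ₁ ℓ₂ : ℕ} (hb : 2 ≤ b)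
    (h₁ : 1 ≤ ℓ₁) (h₁' : ℓ₁ ≤ b - 1) (h₂ : 1 ≤ ℓ₂) (h₂' : ℓ₂ ≤ b - 1)
    (hm₁ : m₁ < b ^ j₁) (hm₂ : m₂ < b ^ j₂) :
    ‖Wint b j₁ m₁ ℓ₁ * Wint b j₂ m₂ ℓ₂‖
      = ((b:ℝ)^(2*j₁+2*j₂+2))⁻¹ /
          (‖bexp b ℓ₁ 1 - 1‖ * ‖bexp b ℓ₂ 1 - 1‖) := by
  have hbp := bposR (b := b) hb
  have hE₁ : ‖bexp b ℓ₁ 1 - 1‖ ≠ 0 :=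
    ne_of_gt (norm_pos_iff.mpr (sub_ne_zero.2 (bexp_ne_one hb h₁ h₁')))
  have hE₂ : ‖bexp b ℓ₂ 1 - 1‖ ≠ 0 :=
    ne_of_gt (norm_pos_iff.mpr (sub_ne_zero.2 (bexp_ne_one hb h₂ h₂')))
  rw [Wint_eq hb h₁ h₁' hm₁, Wint_eq hb h₂ h₂' hm₂]
  rw [norm_mul, norm_mul, norm_mul, norm_pow, norm_pow, norm_inv, norm_inv,
    norm_div, norm_div, norm_pow, norm_pow, Complex.norm_natCast]
  field_simp
  ring


/-- Proposition 5.1 (ii): for `n − 1 ≤ j₁ + j₂` and `j₁, j₂ ≤ n`, all Haar coefficients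
of the discrepancy function satisfy `|μ| ≤ c·b^{−n−j₁−j₂}` (with `c` depending only on
`b`), and all but at most `bⁿ` of them (for fixed `j` and `ℓ`) have absolute value
exactly `b^{−2j₁−2j₂−2}/(|e(ℓ₁)−1||e(ℓ₂)−1|)`. -/
theorem abs_haar_coeff_disc_medium (b : ℕ) (hb : 2 ≤ b) :
    ∃ c : ℝ, 0 < c ∧
      ∀ n : ℕ, 1 ≤ n → ∀ s : Fin n → ℕ → ℕ, IsDigitMaps b n s →
        ∀ j₁ j₂ : ℕ, n ≤ j₁ + j₂ + 1 → j₁ ≤ n → j₂ ≤ n →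
          ∀ ℓ₁ ℓ₂ : ℕ, 1 ≤ ℓ₁ → ℓ₁ ≤ b - 1 → 1 ≤ ℓ₂ → ℓ₂ ≤ b - 1 →
            (∀ m₁ m₂ : ℕ, m₁ < b ^ j₁ → m₂ < b ^ j₂ →
                ‖mu b n s j₁ j₂ m₁ m₂ ℓ₁ ℓ₂‖
                  ≤ c * (b:ℝ) ^ (-(n:ℤ) - j₁ - j₂)) ∧
            (((Finset.range (b ^ j₁) ×ˢ Finset.range (b ^ j₂)).filter
                (fun m : ℕ × ℕ =>
                  ‖mu b n s j₁ j₂ m.1 m.2 ℓ₁ ℓ₂‖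
                    ≠ (b:ℝ) ^ (-2*(j₁:ℤ) - 2*(j₂:ℤ) - 2) /
                        (‖Complex.exp (2 * Real.pi * Complex.I * ℓ₁ / b) - 1‖ *
                         ‖Complex.exp (2 * Real.pi * Complex.I * ℓ₂ / b) - 1‖))).card
              ≤ b ^ n) := by
  classical
  have hbp : (0:ℝ) < b := bposR hb
  have hb0 : (b:ℝ) ≠ 0 := ne_of_gt hbp
  have hne : (Finset.Icc 1 (b-1)).Nonempty := ⟨1, Finset.mem_Icc.2 ⟨le_refl 1, by omega⟩⟩
  set γ : ℝ := (Finset.Icc 1 (b-1)).inf' hne (fun ℓ => ‖bexp b ℓ 1 - 1‖) with hγ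
  have hγpos : 0 < γ := by
    rw [hγ, Finset.lt_inf'_iff]
    intro ℓ hℓ
    rw [Finset.mem_Icc] at hℓ
    exact norm_pos_iff.mpr (sub_ne_zero.2 (bexp_ne_one hb hℓ.1 hℓ.2))
  have hγle : ∀ ℓ, 1 ≤ ℓ → ℓ ≤ b - 1 → γ ≤ ‖bexp b ℓ 1 - 1‖ := fun ℓ h1 h2 =>
    Finset.inf'_le _ (Finset.mem_Icc.2 ⟨h1, h2⟩)
  refine ⟨(b:ℝ) + (γ⁻¹)^2, by positivity, ?_⟩
  intro n hn s hs j₁ j₂ hsum hj₁ hj₂ ℓ₁ ℓ₂ hℓ₁ hℓ₁' hℓ₂ hℓ₂'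
  -- common notation
  have hE₁pos : 0 < ‖bexp b ℓ₁ 1 - 1‖ :=
    norm_pos_iff.mpr (sub_ne_zero.2 (bexp_ne_one hb hℓ₁ hℓ₁'))
  have hE₂pos : 0 < ‖bexp b ℓ₂ 1 - 1‖ :=
    norm_pos_iff.mpr (sub_ne_zero.2 (bexp_ne_one hb hℓ₂ hℓ₂'))
  have hzexp : (b:ℝ) ^ (-(n:ℤ) - j₁ - j₂) = ((b:ℝ)^(n+j₁+j₂))⁻¹ := by
    rw [show (-(n:ℤ) - j₁ - j₂) = -((n+j₁+j₂ : ℕ) : ℤ) by push_cast; ring, zpow_neg,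
      zpow_natCast]
  have hWle : ∀ m₁ m₂ : ℕ, m₁ < b ^ j₁ → m₂ < b ^ j₂ →
      ‖Wint b j₁ m₁ ℓ₁ * Wint b j₂ m₂ ℓ₂‖
        ≤ (γ⁻¹)^2 * ((b:ℝ)^(n+j₁+j₂))⁻¹ := by
    intro m₁ m₂ hm₁ hm₂
    rw [abs_Wint_mul hb hℓ₁ hℓ₁' hℓ₂ hℓ₂' hm₁ hm₂]
    have step1 : ((b:ℝ)^(2*j₁+2*j₂+2))⁻¹ /
        (‖bexp b ℓ₁ 1 - 1‖ * ‖bexp b ℓ₂ 1 - 1‖)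
        ≤ ((b:ℝ)^(2*j₁+2*j₂+2))⁻¹ / (γ * γ) := by
      refine div_le_div_of_nonneg_left (by positivity) (by positivity) ?_
      exact mul_le_mul (hγle _ hℓ₁ hℓ₁') (hγle _ hℓ₂ hℓ₂') (le_of_lt hγpos) (le_of_lt hE₁pos)
    refine step1.trans ?_
    have step2 : ((b:ℝ)^(2*j₁+2*j₂+2))⁻¹ ≤ ((b:ℝ)^(n+j₁+j₂))⁻¹ := by
      refine inv_anti₀ (by positivity) ?_
      refine pow_le_pow_right₀ (by exact_mod_cast hb.trans' (by norm_num) : (1:ℝ) ≤ b) ?_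
      omega
    calc ((b:ℝ)^(2*j₁+2*j₂+2))⁻¹ / (γ * γ)
        = (γ⁻¹)^2 * ((b:ℝ)^(2*j₁+2*j₂+2))⁻¹ := by
          field_simp
      _ ≤ (γ⁻¹)^2 * ((b:ℝ)^(n+j₁+j₂))⁻¹ := by
          refine mul_le_mul_of_nonneg_left step2 (by positivity)
  constructor
  · -- the uniform bound
    intro m₁ m₂ hm₁ hm₂
    rw [mu_eq hb n s j₁ j₂ m₁ m₂ ℓ₁ ℓ₂]
    have hterm : ∀ t : Fin n → Fin b,
        ‖Aint b j₁ m₁ ℓ₁ (z1 b n t) * Aint b j₂ m₂ ℓ₂ (z2 b n s t)‖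
          ≤ (if ⌊(b:ℝ)^j₁ * z1 b n t⌋₊ = m₁ ∧ ⌊(b:ℝ)^j₂ * z2 b n s t⌋₊ = m₂
              then ((b:ℝ)^j₁)⁻¹ * ((b:ℝ)^j₂)⁻¹ else 0) := by
      intro t
      split_ifs with h
      · rw [norm_mul]
        exact mul_le_mul (norm_Aint_le hb hm₁ _) (norm_Aint_le hb hm₂ _)
          (norm_nonneg _) (by positivity)
      · rcases not_and_or.1 h with h' | h'
        · rw [Aint_vanish hb hℓ₁ hℓ₁' hm₁ (z1_nonneg t) h', zero_mul, norm_zero]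
        · rw [Aint_vanish hb hℓ₂ hℓ₂' hm₂ (z2_nonneg s t) h', mul_zero, norm_zero]
    have hsum_le : ‖∑ t : Fin n → Fin b,
        Aint b j₁ m₁ ℓ₁ (z1 b n t) * Aint b j₂ m₂ ℓ₂ (z2 b n s t)‖
        ≤ (b:ℝ) * (((b:ℝ)^j₁)⁻¹ * ((b:ℝ)^j₂)⁻¹) := by
      refine le_trans (norm_sum_le _ _) ?_
      refine le_trans (Finset.sum_le_sum fun t _ => hterm t) ?_
      rw [← Finset.sum_filter, Finset.sum_const, nsmul_eq_mul]
      refine mul_le_mul_of_nonneg_right ?_ (by positivity)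
      have hcard := fiber_card hb hn hj₁ hj₂ hsum hs m₁ m₂
      exact_mod_cast hcard
    refine le_trans (norm_sub_le _ _) ?_
    rw [norm_mul, norm_zpow, Complex.norm_natCast]
    have h1 : (b:ℝ) ^ (-(n:ℤ)) = ((b:ℝ)^n)⁻¹ := by rw [zpow_neg, zpow_natCast]
    rw [h1]
    have hWn : ‖Wint b j₁ m₁ ℓ₁ * Wint b j₂ m₂ ℓ₂‖
        ≤ (γ⁻¹)^2 * ((b:ℝ)^(n+j₁+j₂))⁻¹ := by
      exact hWle m₁ m₂ hm₁ hm₂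
    have hmain : ((b:ℝ)^n)⁻¹ * ‖∑ t : Fin n → Fin b,
        Aint b j₁ m₁ ℓ₁ (z1 b n t) * Aint b j₂ m₂ ℓ₂ (z2 b n s t)‖
        ≤ (b:ℝ) * ((b:ℝ)^(n+j₁+j₂))⁻¹ := by
      have := mul_le_mul_of_nonneg_left hsum_le (by positivity : (0:ℝ) ≤ ((b:ℝ)^n)⁻¹)
      refine this.trans (le_of_eq ?_)
      rw [pow_add, pow_add]
      field_simp
    rw [hzexp]
    calc ((b:ℝ)^n)⁻¹ * ‖∑ t : Fin n → Fin b,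
          Aint b j₁ m₁ ℓ₁ (z1 b n t) * Aint b j₂ m₂ ℓ₂ (z2 b n s t)‖
        + ‖Wint b j₁ m₁ ℓ₁ * Wint b j₂ m₂ ℓ₂‖
        ≤ (b:ℝ) * ((b:ℝ)^(n+j₁+j₂))⁻¹ + (γ⁻¹)^2 * ((b:ℝ)^(n+j₁+j₂))⁻¹ := by
          exact add_le_add hmain hWn
      _ = ((b:ℝ) + (γ⁻¹)^2) * ((b:ℝ)^(n+j₁+j₂))⁻¹ := by ring
  · -- the counting bound
    set Φ : (Fin n → Fin b) → ℕ × ℕ := fun t =>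
      (⌊(b:ℝ)^j₁ * z1 b n t⌋₊, ⌊(b:ℝ)^j₂ * z2 b n s t⌋₊) with hΦ
    have hsub : ((Finset.range (b ^ j₁) ×ˢ Finset.range (b ^ j₂)).filter
        (fun m : ℕ × ℕ =>
          ‖mu b n s j₁ j₂ m.1 m.2 ℓ₁ ℓ₂‖
            ≠ (b:ℝ) ^ (-2*(j₁:ℤ) - 2*(j₂:ℤ) - 2) /
                (‖Complex.exp (2 * Real.pi * Complex.I * ℓ₁ / b) - 1‖ *
                 ‖Complex.exp (2 * Real.pi * Complex.I * ℓ₂ / b) - 1‖)))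
        ⊆ Finset.image Φ Finset.univ := by
      intro m hm
      rw [Finset.mem_filter] at hm
      obtain ⟨hmem, hneq⟩ := hm
      rw [Finset.mem_product, Finset.mem_range, Finset.mem_range] at hmem
      by_contra hnotin
      have hallne : ∀ t : Fin n → Fin b, Φ t ≠ m := by
        intro t ht
        exact hnotin (Finset.mem_image.2 ⟨t, Finset.mem_univ t, ht⟩)
      have hzero : ∑ t : Fin n → Fin b,
          Aint b j₁ m.1 ℓ₁ (z1 b n t) * Aint b j₂ m.2 ℓ₂ (z2 b n s t) = 0 := by
        refine Finset.sum_eq_zero fun t _ => ?_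
        by_cases hc : ⌊(b:ℝ)^j₁ * z1 b n t⌋₊ = m.1
        · have hc2 : ⌊(b:ℝ)^j₂ * z2 b n s t⌋₊ ≠ m.2 := by
            intro hc2
            exact hallne t (Prod.ext hc hc2)
          rw [Aint_vanish hb hℓ₂ hℓ₂' hmem.2 (z2_nonneg s t) hc2, mul_zero]
        · rw [Aint_vanish hb hℓ₁ hℓ₁' hmem.1 (z1_nonneg t) hc, zero_mul]
      have hmu0 : mu b n s j₁ j₂ m.1 m.2 ℓ₁ ℓ₂
          = -(Wint b j₁ m.1 ℓ₁ * Wint b j₂ m.2 ℓ₂) := by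
        rw [mu_eq hb n s j₁ j₂ m.1 m.2 ℓ₁ ℓ₂, hzero, mul_zero, zero_sub]
      apply hneq
      rw [hmu0, norm_neg, abs_Wint_mul hb hℓ₁ hℓ₁' hℓ₂ hℓ₂' hmem.1 hmem.2,
        bexp_one_eq, bexp_one_eq]
      congr 1
      rw [show (-2*(j₁:ℤ) - 2*(j₂:ℤ) - 2) = -((2*j₁+2*j₂+2 : ℕ) : ℤ) by push_cast; ring,
        zpow_neg, zpow_natCast]
    calc ((Finset.range (b ^ j₁) ×ˢ Finset.range (b ^ j₂)).filter _).card
        ≤ (Finset.image Φ Finset.univ).card := Finset.card_le_card hsub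
      _ ≤ (Finset.univ : Finset (Fin n → Fin b)).card := Finset.card_image_le
      _ = b ^ n := by simp
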